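/- Nonexistence of an exact isometry density for hyperbolic 3-space: there do not exist t > 0 and a measurable rotationally invariant function α : B(0, π) → [0, ∞) on the open ball of radius π in ℝ³ such that for almost every ξ ∈ (0, ∞) the integral ∫_{0 < |Y| < π} (sinh(ξ|Y|)/(ξ sin|Y|)) α(Y) dY is finite and equal to e^{t(ξ² + 1)}. -/
import Mathlib

open MeasureTheory Metric Real

noncomputable def I13 (α : EuclideanSpace ℝ (Fin 3) → ℝ) (ξ : ℝ) : ENNReal :=
  ∫⁻ Y in ball (0 : EuclideanSpace ℝ (Fin 3)) π \ {0},
    ENNReal.ofReal (Real.sinh (ξ * ‖Y‖) / (ξ * Real.sin ‖Y‖) * α Y)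

lemma sinh_le_mul_exp {x : ℝ} (_hx : 0 ≤ x) : Real.sinh x ≤ x * Real.exp x := by
  have h1 : 1 - 2 * x ≤ Real.exp (-(2 * x)) := by
    have := Real.add_one_le_exp (-(2 * x)); linarith
  have h2 : Real.exp (-x) = Real.exp x * Real.exp (-(2 * x)) := by
    rw [← Real.exp_add]; ring_nf
  have h3 := Real.exp_pos x
  rw [Real.sinh_eq, h2]
  nlinarith

lemma I13_key (α : EuclideanSpace ℝ (Fin 3) → ℝ)
    (hpos : ∀ Y ∈ ball (0 : EuclideanSpace ℝ (Fin 3)) π, 0 ≤ α Y)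
    {ξ ξ₀ : ℝ} (hξ : 0 < ξ) (hξ₀ : 0 < ξ₀) :
    I13 α ξ ≤ ENNReal.ofReal (Real.exp (ξ * π)) * I13 α ξ₀ := by
  rw [I13, I13, ← lintegral_const_mul' _ _ ENNReal.ofReal_ne_top]
  refine lintegral_mono_ae ?_
  filter_upwards [ae_restrict_mem (measurableSet_ball.diff (measurableSet_singleton 0))]
    with Y hY
  obtain ⟨hYb, hY0⟩ := hY
  set r := ‖Y‖ with hr
  have hr0 : 0 < r := norm_pos_iff.mpr (by simpa using hY0)
  have hrπ : r < π := mem_ball_zero_iff.mp hYb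
  have hsin : 0 < Real.sin r := Real.sin_pos_of_pos_of_lt_pi hr0 hrπ
  have hα : 0 ≤ α Y := hpos Y hYb
  rw [← ENNReal.ofReal_mul (Real.exp_nonneg _)]
  apply ENNReal.ofReal_le_ofReal
  have h1 : Real.sinh (ξ * r) / ξ ≤ r * Real.exp (ξ * π) := by
    rw [div_le_iff₀ hξ]
    have hs := sinh_le_mul_exp (le_of_lt (mul_pos hξ hr0))
    have hee : Real.exp (ξ * r) ≤ Real.exp (ξ * π) :=
      Real.exp_le_exp.mpr (by nlinarith)
    nlinarith [mul_le_mul_of_nonneg_left hee (le_of_lt (mul_pos hξ hr0))]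
  have h2 : r ≤ Real.sinh (ξ₀ * r) / ξ₀ := by
    have := Real.self_lt_sinh_iff.mpr (mul_pos hξ₀ hr0)
    rw [le_div_iff₀ hξ₀]; nlinarith
  have h3 : Real.sinh (ξ * r) / ξ ≤ Real.exp (ξ * π) * (Real.sinh (ξ₀ * r) / ξ₀) := by
    calc Real.sinh (ξ * r) / ξ ≤ r * Real.exp (ξ * π) := h1
      _ ≤ (Real.sinh (ξ₀ * r) / ξ₀) * Real.exp (ξ * π) := by
          exact mul_le_mul_of_nonneg_right h2 (Real.exp_nonneg _)
      _ = Real.exp (ξ * π) * (Real.sinh (ξ₀ * r) / ξ₀) := mul_comm _ _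
  have h4 : Real.sinh (ξ * r) / (ξ * Real.sin r)
      ≤ Real.exp (ξ * π) * (Real.sinh (ξ₀ * r) / (ξ₀ * Real.sin r)) := by
    rw [← div_div, ← div_div, ← mul_div_assoc]
    exact div_le_div_of_nonneg_right h3 hsin.le
  calc Real.sinh (ξ * r) / (ξ * Real.sin r) * α Y
      ≤ (Real.exp (ξ * π) * (Real.sinh (ξ₀ * r) / (ξ₀ * Real.sin r))) * α Y :=
        mul_le_mul_of_nonneg_right h4 hα
    _ = Real.exp (ξ * π) * (Real.sinh (ξ₀ * r) / (ξ₀ * Real.sin r) * α Y) := by ring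

theorem no_exact_isometry_density :
    ¬ ∃ t : ℝ, 0 < t ∧ ∃ α : EuclideanSpace ℝ (Fin 3) → ℝ,
      AEMeasurable α
        ((volume : Measure (EuclideanSpace ℝ (Fin 3))).restrict
          (ball (0 : EuclideanSpace ℝ (Fin 3)) π)) ∧
      (∀ Y ∈ ball (0 : EuclideanSpace ℝ (Fin 3)) π, 0 ≤ α Y) ∧
      (∀ (R : EuclideanSpace ℝ (Fin 3) ≃ₗᵢ[ℝ] EuclideanSpace ℝ (Fin 3)),
        ∀ Y ∈ ball (0 : EuclideanSpace ℝ (Fin 3)) π, α (R Y) = α Y) ∧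
      (∀ᵐ ξ ∂((volume : Measure ℝ).restrict (Set.Ioi (0 : ℝ))),
        I13 α ξ = ENNReal.ofReal (Real.exp (t * (ξ ^ 2 + 1)))) := by
  rintro ⟨t, ht, α, hmeas, hpos, hinv, hae⟩
  have hne : (volume.restrict (Set.Ioi (0 : ℝ))) ≠ 0 := by
    simp [Measure.restrict_eq_zero]
  have : (ae (volume.restrict (Set.Ioi (0 : ℝ)))).NeBot := ae_neBot.mpr hne
  obtain ⟨ξ₀, hξ₀eq, hξ₀mem⟩ := (hae.and (ae_restrict_mem measurableSet_Ioi)).exists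
  have hξ₀pos : 0 < ξ₀ := hξ₀mem
  set C := Real.exp (t * (ξ₀ ^ 2 + 1)) with hC
  have hCpos : 0 < C := Real.exp_pos _
  have hae2 : ∀ᵐ ξ ∂(volume.restrict (Set.Ioi (0 : ℝ))),
      Real.exp (t * (ξ ^ 2 + 1)) ≤ Real.exp (ξ * π) * C := by
    filter_upwards [hae, ae_restrict_mem measurableSet_Ioi] with ξ hξeq hξpos
    have h := I13_key α hpos hξpos hξ₀pos
    rw [hξeq, hξ₀eq, ← ENNReal.ofReal_mul (Real.exp_nonneg _)] at h
    exact (ENNReal.ofReal_le_ofReal_iff (by positivity)).mp h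
  set ξ₁ : ℝ := max 1 ((π + |Real.log C|) / t) with hξ₁
  have hbad : Set.Ioi ξ₁ ⊆ {ξ : ℝ | ¬ (Real.exp (t * (ξ ^ 2 + 1)) ≤ Real.exp (ξ * π) * C)} := by
    intro ξ hξ
    simp only [Set.mem_setOf_eq]
    intro hle
    have hξ1 : 1 ≤ ξ := le_of_lt (lt_of_le_of_lt (le_max_left _ _) hξ)
    have hξ2 : (π + |Real.log C|) / t < ξ := lt_of_le_of_lt (le_max_right _ _) hξ
    have h3 : π + |Real.log C| < t * ξ := by
      rw [div_lt_iff₀ ht] at hξ2; linarith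
    have hrw : Real.exp (ξ * π) * C = Real.exp (ξ * π + Real.log C) := by
      rw [Real.exp_add, Real.exp_log hCpos]
    rw [hrw] at hle
    have hlog : t * (ξ ^ 2 + 1) ≤ ξ * π + Real.log C := Real.exp_le_exp.mp hle
    nlinarith [le_abs_self (Real.log C), abs_nonneg (Real.log C)]
  have h0 : (volume.restrict (Set.Ioi (0 : ℝ)))
      {ξ : ℝ | ¬ (Real.exp (t * (ξ ^ 2 + 1)) ≤ Real.exp (ξ * π) * C)} = 0 := by
    exact hae2
  have h1 : (volume.restrict (Set.Ioi (0 : ℝ))) (Set.Ioi ξ₁) = 0 :=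
    measure_mono_null hbad h0
  have hξ₁pos : (0 : ℝ) ≤ ξ₁ := le_trans zero_le_one (le_max_left _ _)
  rw [Measure.restrict_apply measurableSet_Ioi] at h1
  have : Set.Ioi ξ₁ ∩ Set.Ioi (0 : ℝ) = Set.Ioi ξ₁ := by
    apply Set.inter_eq_self_of_subset_left
    intro x hx; exact lt_of_le_of_lt hξ₁pos hx
  rw [this, Real.volume_Ioi] at h1
  exact ENNReal.top_ne_zero h1
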